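/- Fix ℓ > 0 and let I = [−ℓ, ℓ]. For every bounded measurable function f : I → ℝ, every t > 0 and every x ∈ ℝ, one has | ∫_{−ℓ}^{ℓ} f(y) · (x−y) · ( ∫₀ᵗ (2π(t−s)³)^{−1/2} · exp(−(x−y)²/(2(t−s))) ds ) dy | ≤ 2ℓ · sup_{y∈I} |f(y)|. -/

import Mathlib

open MeasureTheory Real Set

lemma gauss_half : ∫ v in Set.Iic (0:ℝ), Real.exp (-v^2/2) = Real.sqrt (2*Real.pi) / 2 := by
  have hint : Integrable (fun v : ℝ => Real.exp (-v^2/2)) := by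
    have := integrable_exp_neg_mul_sq (b := (1/2 : ℝ)) (by norm_num)
    convert this using 2 with v
    ring_nf
  have htot : ∫ v : ℝ, Real.exp (-v^2/2) = Real.sqrt (2*Real.pi) := by
    have := integral_gaussian (1/2)
    rw [show (Real.pi / (1/2 : ℝ)) = 2 * Real.pi by ring] at this
    rw [← this]
    congr 1 with v
    ring_nf
  have hsym : ∫ v in Set.Iic (0:ℝ), Real.exp (-v^2/2)
      = ∫ v in Set.Ioi (0:ℝ), Real.exp (-v^2/2) := by
    rw [← neg_zero, ← integral_comp_neg_Iic]
    norm_num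
  have hsplit : (∫ v in Set.Iic (0:ℝ), Real.exp (-v^2/2))
      + ∫ v in Set.Ioi (0:ℝ), Real.exp (-v^2/2) = ∫ v : ℝ, Real.exp (-v^2/2) := by
    rw [← setIntegral_union (Iic_disjoint_Ioi le_rfl) measurableSet_Ioi
      hint.integrableOn hint.integrableOn, Iic_union_Ioi, Measure.restrict_univ]
  rw [← hsym] at hsplit
  linarith [hsplit, htot]


lemma key_bound (a t : ℝ) (ht : 0 < t) :
    |a * ∫ s in (0:ℝ)..t,
        (Real.sqrt (2 * Real.pi * (t - s) ^ 3))⁻¹ * Real.exp (-a ^ 2 / (2 * (t - s)))| ≤ 1 := by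
  rcases eq_or_ne a 0 with rfl | ha
  · simp
  set g : ℝ → ℝ := fun u => (Real.sqrt (2 * Real.pi * u ^ 3))⁻¹ * Real.exp (-a ^ 2 / (2 * u))
    with hg
  have hA0 : (0:ℝ) < |a| := abs_pos.mpr ha
  have ha2 : (0:ℝ) < a ^ 2 := by rw [← sq_abs]; positivity
  have hst : 0 < Real.sqrt t := Real.sqrt_pos.mpr ht
  have hπ : (0:ℝ) < Real.sqrt (2 * Real.pi) := Real.sqrt_pos.mpr (by positivity)
  set c : ℝ := -(|a| / Real.sqrt t) with hc
  have hc0 : c < 0 := by rw [hc]; simp only [neg_neg, neg_lt, neg_zero]; positivity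
  set F : ℝ → ℝ := fun v => a ^ 2 / v ^ 2 with hF
  set F' : ℝ → ℝ := fun v => -2 * a ^ 2 / v ^ 3 with hF'
  -- step 1: rewrite as integral of g over Ioc 0 t
  have h1 : (∫ s in (0:ℝ)..t,
      (Real.sqrt (2 * Real.pi * (t - s) ^ 3))⁻¹ * Real.exp (-a ^ 2 / (2 * (t - s))))
      = ∫ u in Set.Ioc (0:ℝ) t, g u := by
    have := intervalIntegral.integral_comp_sub_left (a := (0:ℝ)) (b := t) g t
    simp only [sub_zero, sub_self] at this
    rw [show (∫ s in (0:ℝ)..t,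
        (Real.sqrt (2 * Real.pi * (t - s) ^ 3))⁻¹ * Real.exp (-a ^ 2 / (2 * (t - s))))
        = ∫ s in (0:ℝ)..t, g (t - s) from rfl, this,
      intervalIntegral.integral_of_le ht.le]
  have hc2 : c ^ 2 = a ^ 2 / t := by
    rw [hc, neg_sq, div_pow, sq_abs, Real.sq_sqrt ht.le]
  -- image of Iic c under F is Ioc 0 t
  have himg : F '' Set.Iic c = Set.Ioc (0:ℝ) t := by
    ext u
    simp only [Set.mem_image, Set.mem_Iic, Set.mem_Ioc]
    constructor
    · rintro ⟨v, hv, rfl⟩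
      have hv0 : v < 0 := lt_of_le_of_lt hv hc0
      have hv2 : (0:ℝ) < v ^ 2 := by nlinarith
      have hcc : (0:ℝ) < c ^ 2 := by nlinarith
      refine ⟨by simp only [hF]; exact div_pos ha2 hv2, ?_⟩
      simp only [hF]
      have habs : -c ≤ -v := by linarith
      have hcv : c ^ 2 ≤ v ^ 2 := by nlinarith
      calc a ^ 2 / v ^ 2 ≤ a ^ 2 / c ^ 2 := by gcongr
        _ = t := by rw [hc2]; field_simp
    · rintro ⟨hu0, hut⟩
      have hsu : 0 < Real.sqrt u := Real.sqrt_pos.mpr hu0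
      refine ⟨-(|a| / Real.sqrt u), ?_, ?_⟩
      · rw [hc]
        have : |a| / Real.sqrt t ≤ |a| / Real.sqrt u := by gcongr
        linarith
      · simp only [hF]
        have h2 : (-(|a| / Real.sqrt u)) ^ 2 = a ^ 2 / u := by
          rw [neg_sq, div_pow, sq_abs, Real.sq_sqrt hu0.le]
        rw [h2]
        field_simp
  -- derivative
  have hderiv : ∀ v ∈ Set.Iic c, HasDerivWithinAt F (F' v) (Set.Iic c) v := by
    intro v hv
    have hv0 : v < 0 := lt_of_le_of_lt hv hc0
    have hvne : v ≠ 0 := hv0.ne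
    have hv2 : (v:ℝ) ^ 2 ≠ 0 := pow_ne_zero 2 hvne
    have h := ((hasDerivAt_pow 2 v).inv hv2).const_mul (a ^ 2)
    have heq : HasDerivAt F (F' v) v := by
      refine h.congr_deriv ?_
      simp only [hF']
      push_cast
      field_simp
    exact heq.hasDerivWithinAt
  -- injectivity
  have hinj : Set.InjOn F (Set.Iic c) := by
    intro v hv w hw h
    simp only [Set.mem_Iic] at hv hw
    have hv0 : v < 0 := lt_of_le_of_lt hv hc0
    have hw0 : w < 0 := lt_of_le_of_lt hw hc0
    simp only [hF] at h
    have hvne : v ^ 2 ≠ 0 := pow_ne_zero 2 hv0.ne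
    have hwne : w ^ 2 ≠ 0 := pow_ne_zero 2 hw0.ne
    have : v ^ 2 = w ^ 2 := by
      field_simp at h
      rw [div_eq_div_iff hvne hwne] at h
      linarith
    nlinarith [this]
  -- change of variables
  have h2 : ∫ u in Set.Ioc (0:ℝ) t, g u = ∫ v in Set.Iic c, |F' v| • g (F v) := by
    rw [← himg]
    exact integral_image_eq_integral_abs_deriv_smul measurableSet_Iic hderiv hinj g
  -- pointwise simplification
  have h3 : ∫ v in Set.Iic c, |F' v| • g (F v)
      = ∫ v in Set.Iic c, (2 / (|a| * Real.sqrt (2 * Real.pi))) * Real.exp (-v ^ 2 / 2) := by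
    apply setIntegral_congr_fun measurableSet_Iic
    intro v hv
    simp only [Set.mem_Iic] at hv
    have hv0 : v < 0 := lt_of_le_of_lt hv hc0
    have hv2 : (0:ℝ) < v ^ 2 := by nlinarith
    have hva3 : (0:ℝ) < |v| ^ 3 := pow_pos (abs_pos.mpr hv0.ne) 3
    have hFv : F v = a ^ 2 / v ^ 2 := rfl
    have hsqrt : Real.sqrt (2 * Real.pi * (F v) ^ 3)
        = Real.sqrt (2 * Real.pi) * (|a| ^ 3 / |v| ^ 3) := by
      rw [Real.sqrt_mul (by positivity), hFv]
      congr 1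
      have e1 : (|a| ^ 3) ^ 2 = (a ^ 2) ^ 3 := by
        rw [← pow_mul, ← pow_mul, pow_abs]
        exact abs_of_nonneg (by rw [pow_mul]; exact sq_nonneg _)
      have e2 : (|v| ^ 3) ^ 2 = (v ^ 2) ^ 3 := by
        rw [← pow_mul, ← pow_mul, pow_abs]
        exact abs_of_nonneg (by rw [pow_mul]; exact sq_nonneg _)
      rw [show (a ^ 2 / v ^ 2) ^ 3 = (|a| ^ 3 / |v| ^ 3) ^ 2 by
        rw [div_pow, div_pow, e1, e2]]
      exact Real.sqrt_sq (by positivity)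
    have hexp : -a ^ 2 / (2 * F v) = -v ^ 2 / 2 := by
      rw [hFv]; field_simp
    have hF'v : |F' v| = 2 * a ^ 2 / |v| ^ 3 := by
      simp only [hF']
      rw [abs_div, abs_pow]
      congr 1
      rw [abs_mul, abs_neg, abs_two, abs_of_pos ha2]
    simp only [smul_eq_mul, hg]
    rw [hsqrt, hexp, hF'v]
    field_simp
    rw [mul_div_assoc, div_self (abs_pos.mpr hv0.ne).ne', mul_one, sq_abs]
  -- final bound
  have hmono : ∫ v in Set.Iic c, Real.exp (-v ^ 2 / 2)
      ≤ ∫ v in Set.Iic (0:ℝ), Real.exp (-v ^ 2 / 2) := by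
    apply setIntegral_mono_set
    · have : Integrable (fun v : ℝ => Real.exp (-v^2/2)) := by
        have := integrable_exp_neg_mul_sq (b := (1/2 : ℝ)) (by norm_num)
        convert this using 2 with v
        ring_nf
      exact this.integrableOn
    · filter_upwards with v using (Real.exp_pos _).le
    · exact HasSubset.Subset.eventuallyLE (Set.Iic_subset_Iic.mpr hc0.le)
  have hpos : (0:ℝ) ≤ ∫ v in Set.Iic c, Real.exp (-v ^ 2 / 2) :=
    setIntegral_nonneg measurableSet_Iic (fun v _ => (Real.exp_pos _).le)
  have hval : (∫ s in (0:ℝ)..t,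
      (Real.sqrt (2 * Real.pi * (t - s) ^ 3))⁻¹ * Real.exp (-a ^ 2 / (2 * (t - s))))
      = (2 / (|a| * Real.sqrt (2 * Real.pi))) * ∫ v in Set.Iic c, Real.exp (-v ^ 2 / 2) := by
    rw [h1, h2, h3, integral_const_mul]
  rw [hval, abs_mul]
  have hIic0 : ∫ v in Set.Iic (0:ℝ), Real.exp (-v ^ 2 / 2) = Real.sqrt (2 * Real.pi) / 2 :=
    gauss_half
  calc |a| * |2 / (|a| * Real.sqrt (2 * Real.pi)) * ∫ v in Set.Iic c, Real.exp (-v ^ 2 / 2)|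
      = |a| * (2 / (|a| * Real.sqrt (2 * Real.pi)) * ∫ v in Set.Iic c, Real.exp (-v ^ 2 / 2)) := by
        rw [abs_of_nonneg (mul_nonneg (by positivity) hpos)]
    _ ≤ |a| * (2 / (|a| * Real.sqrt (2 * Real.pi)) * (Real.sqrt (2 * Real.pi) / 2)) := by
        gcongr
        rw [← hIic0]
        exact hmono
    _ = 1 := by field_simp

/-- Core estimate in the proof of Lemma 3.6: for bounded measurable `f` on
`I = [-ℓ,ℓ]`, all `t > 0` and `x ∈ ℝ`,
`|∫_I f(y) (x-y) (∫₀ᵗ (2π(t-s)³)^{-1/2} exp(-(x-y)²/(2(t-s))) ds) dy| ≤ 2ℓ sup_I |f|`. -/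
theorem heat_kernel_deriv_convolution_bound (ℓ : ℝ) (hℓ : 0 < ℓ)
    (f : ℝ → ℝ) (hmeas : Measurable f)
    (hbdd : BddAbove ((fun y => |f y|) '' Set.Icc (-ℓ) ℓ))
    (t : ℝ) (ht : 0 < t) (x : ℝ) :
    |∫ y in (-ℓ)..ℓ, f y * (x - y) *
        (∫ s in (0 : ℝ)..t,
          (Real.sqrt (2 * Real.pi * (t - s) ^ 3))⁻¹ *
            Real.exp (-(x - y) ^ 2 / (2 * (t - s))))|
      ≤ 2 * ℓ * sSup ((fun y => |f y|) '' Set.Icc (-ℓ) ℓ) := by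
  set M := sSup ((fun y => |f y|) '' Set.Icc (-ℓ) ℓ) with hM
  have hle : (-ℓ : ℝ) ≤ ℓ := by linarith
  have hfM : ∀ y ∈ Set.Icc (-ℓ) ℓ, |f y| ≤ M := fun y hy =>
    le_csSup hbdd ⟨y, hy, rfl⟩
  have hbound : ∀ y ∈ Set.uIoc (-ℓ) ℓ,
      ‖f y * (x - y) * (∫ s in (0 : ℝ)..t,
        (Real.sqrt (2 * Real.pi * (t - s) ^ 3))⁻¹ *
          Real.exp (-(x - y) ^ 2 / (2 * (t - s))))‖ ≤ M := by
    intro y hy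
    rw [Set.uIoc_of_le hle] at hy
    have hyI : y ∈ Set.Icc (-ℓ) ℓ := ⟨hy.1.le, hy.2⟩
    rw [Real.norm_eq_abs, mul_assoc, abs_mul]
    have h1 := key_bound (x - y) t ht
    calc |f y| * |(x - y) * (∫ s in (0 : ℝ)..t,
          (Real.sqrt (2 * Real.pi * (t - s) ^ 3))⁻¹ *
            Real.exp (-(x - y) ^ 2 / (2 * (t - s))))|
        ≤ M * 1 := mul_le_mul (hfM y hyI) h1 (abs_nonneg _)
          (le_trans (abs_nonneg _) (hfM y hyI))
      _ = M := mul_one M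
  have := intervalIntegral.norm_integral_le_of_norm_le_const hbound
  rw [Real.norm_eq_abs] at this
  calc |∫ y in (-ℓ)..ℓ, f y * (x - y) *
        (∫ s in (0 : ℝ)..t,
          (Real.sqrt (2 * Real.pi * (t - s) ^ 3))⁻¹ *
            Real.exp (-(x - y) ^ 2 / (2 * (t - s))))|
      ≤ M * |ℓ - (-ℓ)| := this
    _ = 2 * ℓ * M := by
        rw [abs_of_nonneg (by linarith : (0:ℝ) ≤ ℓ - (-ℓ))]
        ring
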